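/- Let $H \trianglelefteq G$ with quotient map $\pi : G \to G/H$. Then for any finite nonempty subsets $A_1, A_2 \subseteq G$, $|(A_1 \cup A_2)_4| \geq \frac{|\pi(A_1 A_2)|}{|\pi(A_1)|} \cdot |A_1|$. -/

import Mathlib

open scoped Pointwise

theorem stmt_7 {G : Type*} [Group G] (H : Subgroup G) [H.Normal] (A₁ A₂ : Set G)
    (hA₁ : A₁.Finite) (hA₂ : A₂.Finite) (hne₁ : A₁.Nonempty) (hne₂ : A₂.Nonempty) :
    ((((A₁ ∪ A₂) ∪ (A₁ ∪ A₂)⁻¹ ∪ {1} : Set G) ^ 4).ncard : ℝ) ≥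
      (((QuotientGroup.mk : G → G ⧸ H) '' (A₁ * A₂)).ncard : ℝ) /
        (((QuotientGroup.mk : G → G ⧸ H) '' A₁).ncard : ℝ) * (A₁.ncard : ℝ) := by
  classical
  set π : G → G ⧸ H := QuotientGroup.mk with hπ
  set U : Set G := (A₁ ∪ A₂) ∪ (A₁ ∪ A₂)⁻¹ ∪ {1} with hU
  have hA₁U : A₁ ⊆ U := fun a ha => Or.inl (Or.inl (Or.inl ha))
  have hA₂U : A₂ ⊆ U := fun a ha => Or.inl (Or.inl (Or.inr ha))
  have h1U : (1 : G) ∈ U := Or.inr rfl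
  have hUfin : U.Finite :=
    (((hA₁.union hA₂).union (hA₁.union hA₂).inv).union (Set.finite_singleton 1))
  have h4 : U ^ 4 = U * U * (U * U) := by rw [pow_succ, pow_succ, sq, mul_assoc]
  have hU4fin : (U ^ 4).Finite := by
    rw [h4]; exact (hUfin.mul hUfin).mul (hUfin.mul hUfin)
  set F1 : Finset G := hA₁.toFinset with hF1
  set F2 : Finset G := hA₂.toFinset with hF2
  set T4 : Finset G := hU4fin.toFinset with hT4
  have hF1ne : F1.Nonempty := by rw [hF1, Set.Finite.toFinset_nonempty]; exact hne₁
  have hF2ne : F2.Nonempty := by rw [hF2, Set.Finite.toFinset_nonempty]; exact hne₂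
  -- the largest fiber
  obtain ⟨c₀, hc₀mem, hc₀max⟩ :=
    Finset.exists_max_image (F1.image π) (fun c => (F1.filter fun a => π a = c).card)
      (Finset.image_nonempty.mpr hF1ne)
  set B : Finset G := F1.filter fun a => π a = c₀ with hB
  set K : ℕ := ((F1 * F2).image π).card with hK
  set M : ℕ := (F1.image π).card with hM
  -- pigeonhole: F1.card ≤ M * B.card
  have hNle : F1.card ≤ M * B.card := by
    have hsum : F1.card = ∑ c ∈ F1.image π, (F1.filter fun a => π a = c).card :=
      Finset.card_eq_sum_card_fiberwise (fun x hx => Finset.mem_image_of_mem π hx)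
    calc F1.card = ∑ c ∈ F1.image π, (F1.filter fun a => π a = c).card := hsum
      _ ≤ (F1.image π).card • B.card :=
          Finset.sum_le_card_nsmul _ _ _ (fun c hc => hc₀max c hc)
      _ = M * B.card := by rw [smul_eq_mul]
  -- representatives
  set x : G ⧸ H → G := fun c => if h : ∃ a, a ∈ F1 * F2 ∧ π a = c then h.choose else 1
    with hxdef
  have hxspec : ∀ c ∈ (F1 * F2).image π, x c ∈ F1 * F2 ∧ π (x c) = c := by
    intro c hc
    obtain ⟨a, ha, hac⟩ := Finset.mem_image.mp hc
    have h : ∃ a, a ∈ F1 * F2 ∧ π a = c := ⟨a, ha, hac⟩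
    simp only [hxdef, dif_pos h]
    exact h.choose_spec
  -- injection into U^4
  have hKB : K * B.card ≤ T4.card := by
    have := Finset.card_le_card_of_injOn (fun p : (G ⧸ H) × G => x p.1 * p.2)
      (s := ((F1 * F2).image π) ×ˢ B) (t := T4)
      (by
        rintro ⟨c, b⟩ hp
        rw [Finset.mem_coe, Finset.mem_product] at hp
        obtain ⟨hxm, hxπ⟩ := hxspec c hp.1
        obtain ⟨a₁, ha₁, a₂, ha₂, hprod⟩ := Finset.mem_mul.mp hxm
        have hbA : b ∈ A₁ := by
          have := (Finset.mem_filter.mp hp.2).1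
          rwa [hF1, Set.Finite.mem_toFinset] at this
        have ha₁A : a₁ ∈ A₁ := by rwa [hF1, Set.Finite.mem_toFinset] at ha₁
        have ha₂A : a₂ ∈ A₂ := by rwa [hF2, Set.Finite.mem_toFinset] at ha₂
        rw [Finset.mem_coe, hT4, Set.Finite.mem_toFinset, h4]
        show x c * b ∈ U * U * (U * U)
        have hxb : x c * b = (a₁ * a₂) * (b * 1) := by rw [mul_one, hprod]
        rw [hxb]
        exact Set.mul_mem_mul (Set.mul_mem_mul (hA₁U ha₁A) (hA₂U ha₂A))
          (Set.mul_mem_mul (hA₁U hbA) h1U))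
      (by
        rintro ⟨c, b⟩ hp ⟨c', b'⟩ hp' heq
        simp only [Finset.coe_product, Set.mem_prod, Finset.mem_coe] at hp hp'
        obtain ⟨hxm, hxπ⟩ := hxspec c hp.1
        obtain ⟨hxm', hxπ'⟩ := hxspec c' hp'.1
        have hbc : π b = c₀ := (Finset.mem_filter.mp hp.2).2
        have hbc' : π b' = c₀ := (Finset.mem_filter.mp hp'.2).2
        have hcc : c = c' := by
          have := congrArg π heq
          simp only [hπ, QuotientGroup.mk_mul] at this
          rw [← hπ] at this
          rw [hxπ, hxπ', hbc, hbc'] at this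
          exact mul_right_cancel this
        have hbb : b = b' := by
          rw [hcc] at heq
          exact mul_left_cancel heq
        simp [hcc, hbb])
    rwa [Finset.card_product] at this
  have hMpos : 0 < M := Finset.card_pos.mpr (Finset.image_nonempty.mpr hF1ne)
  -- translate set ncards to finset cards
  have hA₁card : A₁.ncard = F1.card := Set.ncard_eq_toFinset_card A₁ hA₁
  have himA₁ : (π '' A₁).ncard = M := by
    rw [hM, ← Set.ncard_coe_finset (Finset.image π F1), Finset.coe_image, hF1,
      Set.Finite.coe_toFinset]
  have himA₁₂ : (π '' (A₁ * A₂)).ncard = K := by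
    rw [hK, ← Set.ncard_coe_finset (Finset.image π (F1 * F2)), Finset.coe_image,
      Finset.coe_mul, hF1, hF2, Set.Finite.coe_toFinset, Set.Finite.coe_toFinset]
  have hT4card : (U ^ 4).ncard = T4.card := Set.ncard_eq_toFinset_card _ hU4fin
  rw [ge_iff_le, himA₁, himA₁₂, hA₁card, hT4card, div_mul_eq_mul_div,
    div_le_iff₀ (by exact_mod_cast hMpos)]
  have key : K * F1.card ≤ T4.card * M := by
    calc K * F1.card ≤ K * (M * B.card) := Nat.mul_le_mul_left _ hNle
      _ = (K * B.card) * M := by ring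
      _ ≤ T4.card * M := Nat.mul_le_mul_right _ hKB
  exact_mod_cast key
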